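/- Let I be a (full-supported) matroidal ideal of degree d in R = k[x_1,...,x_n], and let x, y be two variables of R such that xy does not divide u for every u in the minimal monomial generating set G(I). Then the colon ideals coincide: (I : x) = (I : y). -/

import Mathlib

open MvPolynomial

namespace PaperDefs

variable {k : Type*} [Field k] {n : ℕ}

/-- The total degree of an exponent vector. -/
def edeg (a : Fin n →₀ ℕ) : ℕ := ∑ i, a i

/-- `I` is a monomial ideal: it is generated by a set of monomials. -/
def IsMonomialIdeal (I : Ideal (MvPolynomial (Fin n) k)) : Prop :=
  ∃ S : Set (Fin n →₀ ℕ),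
    I = Ideal.span ((fun a => (MvPolynomial.monomial a (1 : k))) '' S)

/-- The (exponent vectors of the) unique minimal monomial generating set `G(I)`:
monomials of `I` that are minimal with respect to divisibility. -/
def minGens (I : Ideal (MvPolynomial (Fin n) k)) : Set (Fin n →₀ ℕ) :=
  {a | (MvPolynomial.monomial a (1 : k)) ∈ I ∧
    ∀ b : Fin n →₀ ℕ, b < a → (MvPolynomial.monomial b (1 : k)) ∉ I}

/-- A squarefree exponent vector. -/
def SqFree (a : Fin n →₀ ℕ) : Prop := ∀ i, a i ≤ 1

/-- `I` is a polymatroidal ideal of degree `d`. -/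
def IsPolymatroidal (I : Ideal (MvPolynomial (Fin n) k)) (d : ℕ) : Prop :=
  IsMonomialIdeal I ∧ I ≠ ⊥ ∧
  (∀ a ∈ minGens I, edeg a = d) ∧
  ∀ a ∈ minGens I, ∀ b ∈ minGens I, ∀ i : Fin n, b i < a i →
    ∃ j : Fin n, a j < b j ∧
      (MvPolynomial.monomial (a - Finsupp.single i 1 + Finsupp.single j 1) (1 : k)) ∈ I

/-- `I` is a matroidal ideal of degree `d`: a squarefree polymatroidal ideal. -/
def IsMatroidal (I : Ideal (MvPolynomial (Fin n) k)) (d : ℕ) : Prop :=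
  IsPolymatroidal I d ∧ ∀ a ∈ minGens I, SqFree a

/-- `I` is full-supported: every variable divides some minimal generator. -/
def FullSupported (I : Ideal (MvPolynomial (Fin n) k)) : Prop :=
  ∀ i : Fin n, ∃ a ∈ minGens I, a i ≠ 0

/-- The maximal graded ideal `(x_1, ..., x_n)`. -/
noncomputable def varIdeal (k : Type*) [Field k] (n : ℕ) : Ideal (MvPolynomial (Fin n) k) :=
  Ideal.span (Set.range MvPolynomial.X)

/-- The colon ideal `(I : x_i)`. -/
noncomputable def colonVar (I : Ideal (MvPolynomial (Fin n) k)) (i : Fin n) :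
    Ideal (MvPolynomial (Fin n) k) :=
  I.colon ((Ideal.span {MvPolynomial.X i} : Ideal (MvPolynomial (Fin n) k)) : Set (MvPolynomial (Fin n) k))

/-- The height of an ideal: the infimum of `Order.height` over the primes containing it. -/
noncomputable def ht {R : Type*} [CommRing R] (I : Ideal R) : ℕ∞ :=
  ⨅ (p : PrimeSpectrum R) (_ : I ≤ p.asIdeal), Order.height p

/-- `I` is unmixed: all associated primes of `R/I` have the same height. -/
def IsUnmixed (I : Ideal (MvPolynomial (Fin n) k)) : Prop :=
  ∀ p ∈ associatedPrimes (MvPolynomial (Fin n) k) (MvPolynomial (Fin n) k ⧸ I),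
    ∀ q ∈ associatedPrimes (MvPolynomial (Fin n) k) (MvPolynomial (Fin n) k ⧸ I),
      ht p = ht q

/-- The arithmetical rank of `I`. -/
noncomputable def ara (I : Ideal (MvPolynomial (Fin n) k)) : ℕ :=
  sInf {t : ℕ | ∃ f : Fin t → MvPolynomial (Fin n) k,
    (Ideal.span (Set.range f)).radical = I.radical}

/-- The squarefree Veronese ideal of degree `d`. -/
noncomputable def sqfreeVeronese (k : Type*) [Field k] (n d : ℕ) : Ideal (MvPolynomial (Fin n) k) :=
  Ideal.span ((fun s : Finset (Fin n) => ∏ i ∈ s, MvPolynomial.X i) ''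
    {s : Finset (Fin n) | s.card = d})

/-- The depth of `R/I` : the supremum of lengths of `R/I`-regular sequences consisting of
elements of the maximal graded ideal. -/
noncomputable def quotDepth (I : Ideal (MvPolynomial (Fin n) k)) : ℕ :=
  sSup {r : ℕ | ∃ rs : List (MvPolynomial (Fin n) k), rs.length = r ∧
    (∀ x ∈ rs, x ∈ varIdeal k n) ∧
    RingTheory.Sequence.IsRegular (MvPolynomial (Fin n) k ⧸ I) rs}

/-- `R/I` is Cohen–Macaulay: the depth of `R/I` equals its Krull dimension. -/
def IsCohenMacaulayQuot (I : Ideal (MvPolynomial (Fin n) k)) : Prop :=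
  (quotDepth I : WithBot ℕ∞) = ringKrullDim (MvPolynomial (Fin n) k ⧸ I)


section Aux

variable {k : Type*} [Field k] {n : ℕ}

lemma edeg_add (a b : Fin n →₀ ℕ) : edeg (a + b) = edeg a + edeg b := by
  simp [edeg, Finset.sum_add_distrib]

lemma edeg_single (i : Fin n) (m : ℕ) : edeg (Finsupp.single i m) = m := by
  classical
  simp [edeg, Finsupp.single_apply]

lemma monomial_mem_of_le {I : Ideal (MvPolynomial (Fin n) k)} {a b : Fin n →₀ ℕ}
    (h : monomial b (1:k) ∈ I) (hle : b ≤ a) : monomial a (1:k) ∈ I := by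
  have : monomial a (1:k) = monomial (a - b) 1 * monomial b 1 := by
    rw [monomial_mul, one_mul, tsub_add_cancel_of_le hle]
  rw [this]; exact Ideal.mul_mem_left _ _ h

lemma exists_minGen_le {I : Ideal (MvPolynomial (Fin n) k)} :
    ∀ a : Fin n →₀ ℕ, monomial a (1:k) ∈ I → ∃ m ∈ minGens I, m ≤ a := by
  have hwf : WellFounded ((· < ·) : (Fin n →₀ ℕ) → (Fin n →₀ ℕ) → Prop) := wellFounded_lt
  intro a
  induction a using hwf.induction with
  | _ a ih =>
    intro hmem
    by_cases hmin : ∀ b < a, monomial b (1:k) ∉ I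
    · exact ⟨a, ⟨hmem, hmin⟩, le_refl a⟩
    · push_neg at hmin
      obtain ⟨b, hb, hbI⟩ := hmin
      obtain ⟨m, hm, hle⟩ := ih b hb hbI
      exact ⟨m, hm, hle.trans hb.le⟩

lemma le_eq_of_edeg {a b : Fin n →₀ ℕ} (hle : b ≤ a) (h : edeg a ≤ edeg b) : b = a := by
  by_contra hne
  have hne' : ∃ i, b i ≠ a i := by
    by_contra hx; push_neg at hx; exact hne (Finsupp.ext hx)
  obtain ⟨i, hi⟩ := hne'
  have : edeg b < edeg a := by
    apply Finset.sum_lt_sum (fun j _ => hle j)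
    exact ⟨i, Finset.mem_univ i, lt_of_le_of_ne (hle i) hi⟩
  omega

lemma mem_minGens_of_deg {I : Ideal (MvPolynomial (Fin n) k)} {d : ℕ}
    (hdeg : ∀ a ∈ minGens I, edeg a = d) {a : Fin n →₀ ℕ}
    (hmem : monomial a (1:k) ∈ I) (ha : edeg a = d) : a ∈ minGens I := by
  obtain ⟨m, hm, hle⟩ := exists_minGen_le a hmem
  have : m = a := le_eq_of_edeg hle (by rw [ha, hdeg m hm])
  rwa [← this]

lemma both_le {p q : Fin n} (hpq : p ≠ q) {a : Fin n →₀ ℕ} (hp : a p ≠ 0) (hq : a q ≠ 0) :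
    Finsupp.single p 1 + Finsupp.single q 1 ≤ a := by
  classical
  rw [Finsupp.le_def]
  intro i
  rw [Finsupp.add_apply, Finsupp.single_apply, Finsupp.single_apply]
  have hp' : p = i → a i ≠ 0 := fun h => h ▸ hp
  have hq' : q = i → a i ≠ 0 := fun h => h ▸ hq
  have hpq' : ¬ (p = i ∧ q = i) := fun ⟨h, h'⟩ => hpq (h.trans h'.symm)
  split_ifs with h1 h2 h2
  · exact absurd ⟨h1, h2⟩ hpq'
  · have := hp' h1; omega
  · have := hq' h2; omega
  · omega

lemma parallel_exchange {I : Ideal (MvPolynomial (Fin n) k)} {d : ℕ}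
    (hI : IsMatroidal I d) (p q : Fin n) (hpq : p ≠ q)
    (hdvd : ∀ a ∈ minGens I, ¬ (Finsupp.single p 1 + Finsupp.single q 1 ≤ a))
    {g : Fin n →₀ ℕ} (hg : g ∈ minGens I) (hgp : g p ≠ 0) (hgq : g q = 0)
    {b0 : Fin n →₀ ℕ} (hb0 : b0 ∈ minGens I) (hb0q : b0 q ≠ 0) :
    monomial (g - Finsupp.single p 1 + Finsupp.single q 1) (1:k) ∈ I := by
  classical
  obtain ⟨⟨_, _, hdeg, hexch⟩, _⟩ := hI
  set dist : (Fin n →₀ ℕ) → ℕ := fun b => ∑ i, ((g i - b i) + (b i - g i)) with hdist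
  have key : ∀ N : ℕ, ∀ b : Fin n →₀ ℕ, b ∈ minGens I → b q ≠ 0 → dist b ≤ N →
      monomial (g - Finsupp.single p 1 + Finsupp.single q 1) (1:k) ∈ I := by
    intro N
    induction N with
    | zero =>
      intro b hb hbq hd
      exfalso
      have hd' : (∑ i, ((g i - b i) + (b i - g i))) ≤ 0 := hd
      have h0 : ∀ i ∈ Finset.univ, ((g i - b i) + (b i - g i)) = 0 := by
        rw [← Finset.sum_eq_zero_iff]
        omega
      have := h0 q (Finset.mem_univ q)
      omega
    | succ N ih =>
      intro b hb hbq hd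
      have hbp : b p = 0 := by
        by_contra hbp
        exact hdvd b hb (both_le hpq hbp hbq)
      obtain ⟨j, hj, hjI⟩ := hexch g hg b hb p (by omega)
      by_cases hjq : j = q
      · subst hjq; exact hjI
      · obtain ⟨l, hl, hlI⟩ := hexch b hb g hg j hj
        have hjl : j ≠ l := by intro h; subst h; omega
        set c := b - Finsupp.single j 1 with hc
        have hcb : c + Finsupp.single j 1 = b :=
          tsub_add_cancel_of_le (Finsupp.single_le_iff.2 (by omega))
        set b' := b - Finsupp.single j 1 + Finsupp.single l 1 with hb'
        have hdegb' : edeg b' = d := by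
          have h2 : edeg c + 1 = d := by
            have := hdeg b hb
            rw [← hcb, edeg_add, edeg_single] at this
            exact this
          rw [hb', ← hc, edeg_add, edeg_single]
          omega
        have hb'mem : b' ∈ minGens I := mem_minGens_of_deg hdeg hlI hdegb'
        have happ : ∀ i, b' i = b i - (if j = i then 1 else 0) + (if l = i then 1 else 0) := by
          intro i
          rw [hb', Finsupp.add_apply, Finsupp.tsub_apply, Finsupp.single_apply,
            Finsupp.single_apply]
        have hlq : l ≠ q := by intro h; subst h; omega
        have hb'q : b' q ≠ 0 := by
          have := happ q
          rw [if_neg hjq, if_neg hlq] at this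
          omega
        have hlt : dist b' < dist b := by
          apply Finset.sum_lt_sum
          · intro i _
            have hi := happ i
            by_cases h1 : j = i
            · rw [if_pos h1] at hi
              have hji := h1 ▸ hj
              by_cases h2 : l = i
              · exact absurd (h1.trans h2.symm) hjl
              · rw [if_neg h2] at hi; omega
            · rw [if_neg h1] at hi
              by_cases h2 : l = i
              · rw [if_pos h2] at hi
                have hli := h2 ▸ hl
                omega
              · rw [if_neg h2] at hi; omega
          · refine ⟨j, Finset.mem_univ j, ?_⟩
            have hi := happ j
            rw [if_pos rfl, if_neg (fun h => hjl h.symm)] at hi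
            omega
        exact ih b' hb'mem hb'q (by omega)
  exact key (dist b0) b0 hb0 hb0q le_rfl

lemma key_mono {I : Ideal (MvPolynomial (Fin n) k)} {d : ℕ}
    (hI : IsMatroidal I d) (hfull : FullSupported I)
    (p q : Fin n) (hpq : p ≠ q)
    (hdvd : ∀ a ∈ minGens I, ¬ (Finsupp.single p 1 + Finsupp.single q 1 ≤ a))
    (m : Fin n →₀ ℕ) (h : monomial (m + Finsupp.single p 1) (1:k) ∈ I) :
    monomial (m + Finsupp.single q 1) (1:k) ∈ I := by
  classical
  obtain ⟨g, hg, hle⟩ := exists_minGen_le _ h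
  have hle' : ∀ i, g i ≤ m i + (if p = i then 1 else 0) := by
    intro i
    have := hle i
    rwa [Finsupp.add_apply, Finsupp.single_apply] at this
  by_cases hgp : g p ≤ m p
  · have hgm : g ≤ m := by
      rw [Finsupp.le_def]; intro i
      have := hle' i
      by_cases hpi : p = i
      · subst hpi; exact hgp
      · rwa [if_neg hpi, add_zero] at this
    exact monomial_mem_of_le hg.1 (hgm.trans le_self_add)
  · have hgp0 : g p ≠ 0 := by
      have := hle' p
      omega
    have hgq : g q = 0 := by
      by_contra hgq
      exact hdvd g hg (both_le hpq hgp0 hgq)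
    obtain ⟨b0, hb0, hb0q⟩ := hfull q
    have h2 := parallel_exchange hI p q hpq hdvd hg hgp0 hgq hb0 hb0q
    apply monomial_mem_of_le h2
    rw [Finsupp.le_def]; intro i
    rw [Finsupp.add_apply, Finsupp.tsub_apply, Finsupp.single_apply, Finsupp.single_apply,
      Finsupp.add_apply, Finsupp.single_apply]
    have hi := hle' i
    by_cases hpi : p = i
    · rw [if_pos hpi] at hi
      rw [if_pos hpi, if_neg (fun h : q = i => hpq (hpi.trans h.symm))]
      omega
    · rw [if_neg hpi, add_zero] at hi
      rw [if_neg hpi]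
      by_cases hqi : q = i
      · rw [if_pos hqi]; omega
      · rw [if_neg hqi]; omega

end Aux

end PaperDefs

open PaperDefs in
/-- Lemma 1.1, first part. If `I` is a full-supported matroidal ideal of
degree `d` and `x, y` are two variables such that `xy` divides no minimal generator of `I`,
then `(I : x) = (I : y)`. -/
theorem statement0 {k : Type*} [Field k] {n d : ℕ}
    (I : Ideal (MvPolynomial (Fin n) k))
    (hI : IsMatroidal I d) (hfull : FullSupported I)
    (p q : Fin n) (hpq : p ≠ q)
    (hdvd : ∀ a ∈ minGens I, ¬ (Finsupp.single p 1 + Finsupp.single q 1 ≤ a)) :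
    colonVar I p = colonVar I q := by
  classical
  have main : ∀ (p q : Fin n), p ≠ q →
      (∀ a ∈ minGens I, ¬ (Finsupp.single p 1 + Finsupp.single q 1 ≤ a)) →
      colonVar I p ≤ colonVar I q := by
    intro p q hpq hdvd f hf
    simp only [colonVar, Ideal.mem_colon_span_singleton] at hf ⊢
    obtain ⟨S, hS⟩ := hI.1.1
    rw [hS, mem_ideal_span_monomial_image] at hf ⊢
    intro xi hxi
    rw [mem_support_iff, coeff_mul_X'] at hxi
    have hq : q ∈ xi.support ∧ coeff (xi - Finsupp.single q 1) f ≠ 0 := by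
      by_cases h : q ∈ xi.support
      · rw [if_pos h] at hxi; exact ⟨h, hxi⟩
      · rw [if_neg h] at hxi; exact absurd rfl hxi
    set m := xi - Finsupp.single q 1 with hm
    have hxieq : m + Finsupp.single q 1 = xi := by
      apply tsub_add_cancel_of_le
      rw [Finsupp.single_le_iff]
      have := Finsupp.mem_support_iff.1 hq.1
      omega
    have hmp : coeff (m + Finsupp.single p 1) (f * X p) ≠ 0 := by
      rw [coeff_mul_X]; exact hq.2
    obtain ⟨s, hsS, hsle⟩ := hf _ (mem_support_iff.2 hmp)
    have hsmem : monomial s (1:k) ∈ Ideal.span ((fun a => (monomial a (1:k))) '' S) :=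
      Ideal.subset_span ⟨s, hsS, rfl⟩
    rw [← hS] at hsmem
    have hpI : monomial (m + Finsupp.single p 1) (1:k) ∈ I := monomial_mem_of_le hsmem hsle
    have hqI := key_mono hI hfull p q hpq hdvd m hpI
    rw [hS, mem_ideal_span_monomial_image] at hqI
    have hsupp : m + Finsupp.single q 1 ∈ (monomial (m + Finsupp.single q 1) (1:k)).support := by
      rw [mem_support_iff, coeff_monomial, if_pos rfl]
      exact one_ne_zero
    obtain ⟨s', hs'S, hs'le⟩ := hqI _ hsupp
    exact ⟨s', hs'S, by rwa [hxieq] at hs'le⟩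
  refine le_antisymm (main p q hpq hdvd) (main q p hpq.symm ?_)
  intro a ha h
  exact hdvd a ha (by rwa [add_comm] at h)
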